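/- Integrating the identity of the previous context from 0 to t and rearranging, the estimation error satisfies: ℓᵀFx(t) − ∫₀ᵗ yᵀ(s)u(t−s)ds = (Fx(0))ᵀ(F⁺)ᵀFᵀq(t) + ∫₀ᵗ [qᵀ(t−s)f(s) − uᵀ(t−s)η(s)] ds, provided Fᵀq(0) = Fᵀℓ. -/

import Mathlib

open Matrix MeasureTheory

/-- `Fp` is the Moore–Penrose pseudoinverse of `F`. -/
def IsMoorePenrose {m n : ℕ} (F : Matrix (Fin m) (Fin n) ℝ)
    (Fp : Matrix (Fin n) (Fin m) ℝ) : Prop :=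
  F * Fp * F = F ∧ Fp * F * Fp = Fp ∧ (F * Fp)ᵀ = F * Fp ∧ (Fp * F)ᵀ = Fp * F

section Helpers

/-- dot-with-constant as a continuous linear map. -/
private noncomputable def dotCLM {k : ℕ} (c : Fin k → ℝ) : (Fin k → ℝ) →L[ℝ] ℝ :=
  LinearMap.toContinuousLinearMap
    { toFun := fun v => c ⬝ᵥ v
      map_add' := fun v w => by simp [dotProduct_add]
      map_smul' := fun r v => by simp [dotProduct_smul] }

@[simp] private lemma dotCLM_apply {k : ℕ} (c v : Fin k → ℝ) : dotCLM c v = c ⬝ᵥ v := rfl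

/-- matrix-vector multiplication as a continuous linear map. -/
private noncomputable def mvCLM {k l : ℕ} (N : Matrix (Fin k) (Fin l) ℝ) :
    (Fin l → ℝ) →L[ℝ] (Fin k → ℝ) :=
  LinearMap.toContinuousLinearMap N.mulVecLin

@[simp] private lemma mvCLM_apply {k l : ℕ} (N : Matrix (Fin k) (Fin l) ℝ) (v : Fin l → ℝ) :
    mvCLM N v = N.mulVec v := rfl

private lemma mulVec_dot {k l : ℕ} (N : Matrix (Fin k) (Fin l) ℝ) (v : Fin l → ℝ)
    (w : Fin k → ℝ) : N.mulVec v ⬝ᵥ w = v ⬝ᵥ Nᵀ.mulVec w := by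
  rw [dotProduct_comm, Matrix.dotProduct_mulVec, ← Matrix.mulVec_transpose,
    dotProduct_comm]

private lemma ii_clm_comp {k l : ℕ} {g : ℝ → Fin l → ℝ} {a b : ℝ}
    (hg : IntervalIntegrable g volume a b) (L : (Fin l → ℝ) →L[ℝ] (Fin k → ℝ)) :
    IntervalIntegrable (fun s => L (g s)) volume a b :=
  ⟨L.integrable_comp hg.1, L.integrable_comp hg.2⟩

private lemma ii_dot_const {k : ℕ} {g : ℝ → Fin k → ℝ} {a b : ℝ}
    (hg : IntervalIntegrable g volume a b) (c : Fin k → ℝ) :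
    IntervalIntegrable (fun s => g s ⬝ᵥ c) volume a b := by
  have h : (fun s => g s ⬝ᵥ c) = fun s => dotCLM c (g s) := by
    funext s; simp [dotProduct_comm]
  rw [h]
  exact ⟨(dotCLM c).integrable_comp hg.1, (dotCLM c).integrable_comp hg.2⟩

private lemma ii_const_dot {k : ℕ} {g : ℝ → Fin k → ℝ} {a b : ℝ}
    (hg : IntervalIntegrable g volume a b) (c : Fin k → ℝ) :
    IntervalIntegrable (fun s => c ⬝ᵥ g s) volume a b :=
  ⟨(dotCLM c).integrable_comp hg.1, (dotCLM c).integrable_comp hg.2⟩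

private lemma intInt_dot_const {k : ℕ} {g : ℝ → Fin k → ℝ} {a b : ℝ}
    (hg : IntervalIntegrable g volume a b) (c : Fin k → ℝ) :
    (∫ s in a..b, g s ⬝ᵥ c) = (∫ s in a..b, g s) ⬝ᵥ c := by
  have h : (fun s => g s ⬝ᵥ c) = fun s => dotCLM c (g s) := by
    funext s; simp [dotProduct_comm]
  rw [h, (dotCLM c).intervalIntegral_comp_comm hg, dotCLM_apply, dotProduct_comm]

private lemma intInt_const_dot {k : ℕ} {g : ℝ → Fin k → ℝ} {a b : ℝ}
    (hg : IntervalIntegrable g volume a b) (c : Fin k → ℝ) :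
    (∫ s in a..b, c ⬝ᵥ g s) = c ⬝ᵥ (∫ s in a..b, g s) := by
  rw [show (fun s => c ⬝ᵥ g s) = fun s => dotCLM c (g s) from rfl,
    (dotCLM c).intervalIntegral_comp_comm hg, dotCLM_apply]

private lemma intInt_mulVec {k l : ℕ} {g : ℝ → Fin l → ℝ} {a b : ℝ}
    (hg : IntervalIntegrable g volume a b) (N : Matrix (Fin k) (Fin l) ℝ) :
    (∫ s in a..b, N.mulVec (g s)) = N.mulVec (∫ s in a..b, g s) := by
  rw [show (fun s => N.mulVec (g s)) = fun s => mvCLM N (g s) from rfl,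
    (mvCLM N).intervalIntegral_comp_comm hg, mvCLM_apply]

/-- A function whose indefinite integral vanishes identically is a.e. zero. -/
private lemma ae_zero_aux {T : ℝ} (hT : 0 < T)
    {E : Type*} [NormedAddCommGroup E] [NormedSpace ℝ E] [CompleteSpace E]
    {g : ℝ → E} (hint : IntegrableOn g (Set.Ioc 0 T))
    (h : ∀ τ ∈ Set.Icc (0:ℝ) T, (∫ s in (0:ℝ)..τ, g s) = 0) :
    ∀ᵐ s ∂(volume.restrict (Set.Ioc 0 T)), g s = 0 := by
  have hii : ∀ τ ∈ Set.Icc (0:ℝ) T, IntervalIntegrable g volume 0 τ := by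
    intro τ hτ
    rw [intervalIntegrable_iff_integrableOn_Ioc_of_le hτ.1]
    exact hint.mono_set (Set.Ioc_subset_Ioc_right hτ.2)
  set g' : ℝ → E := (Set.Ioc (0:ℝ) T).indicator g with hg'def
  have hg'int : Integrable g' volume := (integrable_indicator_iff measurableSet_Ioc).2 hint
  have H := IsUnifLocDoublingMeasure.ae_tendsto_average (μ := (volume : Measure ℝ))
    hg'int.locallyIntegrable 1
  rw [← Measure.restrict_congr_set Ioo_ae_eq_Ioc, ae_restrict_iff' measurableSet_Ioo]
  filter_upwards [H] with s hs hsmem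
  obtain ⟨hs0, hsT⟩ := hsmem
  have h1 : Filter.Tendsto (fun r : ℝ => ⨍ y in Metric.closedBall s r, g' y)
      (nhdsWithin 0 (Set.Ioi 0)) (nhds (g' s)) := by
    refine hs (fun _ => s) id Filter.tendsto_id ?_
    filter_upwards [self_mem_nhdsWithin] with r hr
    simp only [Metric.mem_closedBall, dist_self, one_mul]
    exact le_of_lt hr
  have h2 : ∀ᶠ r in nhdsWithin (0:ℝ) (Set.Ioi 0),
      (⨍ y in Metric.closedBall s r, g' y) = 0 := by
    have hmem : Set.Ioo (0:ℝ) (min s (T - s)) ∈ nhdsWithin (0:ℝ) (Set.Ioi 0) :=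
      Ioo_mem_nhdsGT_of_mem ⟨le_refl 0, lt_min hs0 (by linarith)⟩
    filter_upwards [hmem] with r hr
    obtain ⟨hr0, hrm⟩ := hr
    have hrs : r < s := lt_of_lt_of_le hrm (min_le_left _ _)
    have hrT : s + r ≤ T := by
      have := lt_of_lt_of_le hrm (min_le_right _ _); linarith
    have hsub : Set.Icc (s - r) (s + r) ⊆ Set.Ioc 0 T := by
      intro z hz; exact ⟨by linarith [hz.1], by linarith [hz.2]⟩
    have hball : (∫ y in Metric.closedBall s r, g' y) = 0 := by
      rw [Real.closedBall_eq_Icc, hg'def, setIntegral_indicator measurableSet_Ioc,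
        Set.inter_eq_left.2 hsub, integral_Icc_eq_integral_Ioc,
        ← intervalIntegral.integral_of_le (by linarith : s - r ≤ s + r)]
      have e := intervalIntegral.integral_interval_sub_left
        (hii (s + r) ⟨by linarith, hrT⟩) (hii (s - r) ⟨by linarith, by linarith⟩)
      rw [← e, h (s + r) ⟨by linarith, hrT⟩, h (s - r) ⟨by linarith, by linarith⟩, sub_zero]
    rw [setAverage_eq, hball, smul_zero]
  have h0 : g' s = 0 :=
    tendsto_nhds_unique h1 (Filter.Tendsto.congr' (h2.mono fun r hr => hr.symm) tendsto_const_nhds)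
  rwa [hg'def, Set.indicator_of_mem (Set.Ioo_subset_Ioc_self ⟨hs0, hsT⟩)] at h0

private lemma ii_dot_continuousOn {k : ℕ} {t : ℝ} {g w : ℝ → Fin k → ℝ}
    (hg : IntervalIntegrable g volume 0 t) (hw : ContinuousOn w (Set.uIcc 0 t)) :
    IntervalIntegrable (fun s => g s ⬝ᵥ w s) volume 0 t := by
  have hrepr : (fun s => g s ⬝ᵥ w s) = (∑ i : Fin k, fun s => g s i * w s i) := by
    funext s; simp [dotProduct, Finset.sum_apply]
  rw [hrepr]
  refine IntervalIntegrable.sum _ (fun i _ => ?_)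
  have hgi : IntervalIntegrable (fun s => g s i) volume 0 t :=
    ⟨(ContinuousLinearMap.proj (R := ℝ) (φ := fun _ : Fin k => ℝ) i).integrable_comp hg.1,
     (ContinuousLinearMap.proj (R := ℝ) (φ := fun _ : Fin k => ℝ) i).integrable_comp hg.2⟩
  exact hgi.mul_continuousOn ((continuous_apply i).comp_continuousOn hw)

/-- Fubini on the triangle `{(s,σ) : 0 ≤ s, 0 ≤ σ, s + σ ≤ t}`. -/
private lemma triangle_swap {k : ℕ} {t : ℝ} (ht : 0 < t) {a c : ℝ → Fin k → ℝ}
    (ha : IntegrableOn a (Set.Ioc 0 t)) (hc : IntegrableOn c (Set.Ioc 0 t)) :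
    (∫ s in (0:ℝ)..t, a s ⬝ᵥ (∫ σ in (0:ℝ)..(t - s), c σ))
      = ∫ σ in (0:ℝ)..t, (∫ s in (0:ℝ)..(t - σ), a s) ⬝ᵥ c σ := by
  set μ := volume.restrict (Set.Ioc (0:ℝ) t) with hμ
  set K : ℝ × ℝ → ℝ :=
    fun p => {p : ℝ × ℝ | p.1 + p.2 ≤ t}.indicator (fun p => a p.1 ⬝ᵥ c p.2) p with hK
  have hKmeas : MeasurableSet {p : ℝ × ℝ | p.1 + p.2 ≤ t} :=
    measurableSet_le (measurable_fst.add measurable_snd) measurable_const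
  have hKint : Integrable K (μ.prod μ) := by
    refine Integrable.indicator ?_ hKmeas
    have hsum : (fun p : ℝ × ℝ => a p.1 ⬝ᵥ c p.2)
        = fun p : ℝ × ℝ => ∑ i, (fun s => a s i) p.1 * (fun σ => c σ i) p.2 := rfl
    rw [hsum]
    refine integrable_finset_sum _ (fun i _ => ?_)
    have hai : Integrable (fun s => a s i) μ := by
      simpa using (ContinuousLinearMap.proj (R := ℝ) (φ := fun _ : Fin k => ℝ) i).integrable_comp ha
    have hci : Integrable (fun σ => c σ i) μ := by
      simpa using (ContinuousLinearMap.proj (R := ℝ) (φ := fun _ : Fin k => ℝ) i).integrable_comp hc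
    exact Integrable.mul_prod hai hci
  have swap := MeasureTheory.integral_integral_swap (f := fun s σ => K (s, σ)) (μ := μ) (ν := μ)
    hKint
  have claimA : ∀ s ∈ Set.Ioc (0:ℝ) t,
      (∫ σ, K (s, σ) ∂μ) = a s ⬝ᵥ (∫ σ in (0:ℝ)..(t - s), c σ) := by
    intro s hsm
    have hrepr : ∀ σ, K (s, σ) = a s ⬝ᵥ (Set.Iic (t - s)).indicator c σ := by
      intro σ
      by_cases hσ : σ ≤ t - s
      · simp only [hK]
        rw [Set.indicator_of_mem (show (s, σ) ∈ {p : ℝ × ℝ | p.1 + p.2 ≤ t} by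
            simp only [Set.mem_setOf_eq]; linarith),
          Set.indicator_of_mem (show σ ∈ Set.Iic (t - s) from Set.mem_Iic.2 hσ)]
      · simp only [hK]
        rw [Set.indicator_of_notMem (show (s, σ) ∉ {p : ℝ × ℝ | p.1 + p.2 ≤ t} by
            simp only [Set.mem_setOf_eq]; push_neg; linarith),
          Set.indicator_of_notMem (fun hc => hσ (Set.mem_Iic.1 hc)), dotProduct_zero]
    simp_rw [hrepr]
    have hcind : Integrable ((Set.Iic (t - s)).indicator c) μ :=
      hc.indicator measurableSet_Iic
    rw [show (fun σ => a s ⬝ᵥ (Set.Iic (t - s)).indicator c σ)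
        = fun σ => dotCLM (a s) ((Set.Iic (t - s)).indicator c σ) from rfl,
      (dotCLM (a s)).integral_comp_comm hcind, dotCLM_apply]
    congr 1
    rw [hμ, integral_indicator measurableSet_Iic, Measure.restrict_restrict measurableSet_Iic,
      Set.inter_comm, Set.Ioc_inter_Iic, min_eq_right (by linarith [hsm.1] : t - s ≤ t),
      intervalIntegral.integral_of_le (by linarith [hsm.2] : (0:ℝ) ≤ t - s)]
  have claimB : ∀ σ ∈ Set.Ioc (0:ℝ) t,
      (∫ s, K (s, σ) ∂μ) = (∫ s in (0:ℝ)..(t - σ), a s) ⬝ᵥ c σ := by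
    intro σ hσm
    have hrepr : ∀ s, K (s, σ) = c σ ⬝ᵥ (Set.Iic (t - σ)).indicator a s := by
      intro s
      by_cases hs : s ≤ t - σ
      · simp only [hK]
        rw [Set.indicator_of_mem (show (s, σ) ∈ {p : ℝ × ℝ | p.1 + p.2 ≤ t} by
            simp only [Set.mem_setOf_eq]; linarith),
          Set.indicator_of_mem (show s ∈ Set.Iic (t - σ) from Set.mem_Iic.2 hs),
          dotProduct_comm]
      · simp only [hK]
        rw [Set.indicator_of_notMem (show (s, σ) ∉ {p : ℝ × ℝ | p.1 + p.2 ≤ t} by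
            simp only [Set.mem_setOf_eq]; push_neg; linarith),
          Set.indicator_of_notMem (fun hc => hs (Set.mem_Iic.1 hc)), dotProduct_zero]
    simp_rw [hrepr]
    have haind : Integrable ((Set.Iic (t - σ)).indicator a) μ :=
      ha.indicator measurableSet_Iic
    rw [show (fun s => c σ ⬝ᵥ (Set.Iic (t - σ)).indicator a s)
        = fun s => dotCLM (c σ) ((Set.Iic (t - σ)).indicator a s) from rfl,
      (dotCLM (c σ)).integral_comp_comm haind, dotCLM_apply, dotProduct_comm]
    congr 1
    rw [hμ, integral_indicator measurableSet_Iic, Measure.restrict_restrict measurableSet_Iic,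
      Set.inter_comm, Set.Ioc_inter_Iic, min_eq_right (by linarith [hσm.1] : t - σ ≤ t),
      intervalIntegral.integral_of_le (by linarith [hσm.2] : (0:ℝ) ≤ t - σ)]
  rw [intervalIntegral.integral_of_le ht.le, intervalIntegral.integral_of_le ht.le]
  calc (∫ s in Set.Ioc (0:ℝ) t, a s ⬝ᵥ (∫ σ in (0:ℝ)..(t - s), c σ))
      = ∫ s, (∫ σ, K (s, σ) ∂μ) ∂μ := by
        rw [hμ]
        exact (setIntegral_congr_fun measurableSet_Ioc (fun s hs => (claimA s hs).symm))
    _ = ∫ σ, (∫ s, K (s, σ) ∂μ) ∂μ := swap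
    _ = ∫ σ in Set.Ioc (0:ℝ) t, (∫ s in (0:ℝ)..(t - σ), a s) ⬝ᵥ c σ := by
        rw [hμ]
        exact setIntegral_congr_fun measurableSet_Ioc (fun σ hσ => claimB σ hσ)

end Helpers

/-- Integrated error representation: if `(x,f,y,η)` solves the primal DAE, `(q,u)` solves
the dual DAE with `Fᵀq(0) = Fᵀℓ`, then
`ℓᵀFx(t) − ∫₀ᵗ yᵀ(s)u(t−s)ds = (Fx(0))ᵀ(F⁺)ᵀFᵀq(t) + ∫₀ᵗ (qᵀ(t−s)f(s) − uᵀ(t−s)η(s))ds`. -/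
theorem error_representation {m n p : ℕ}
    (F A : Matrix (Fin m) (Fin n) ℝ) (H : Matrix (Fin p) (Fin n) ℝ)
    (Fp : Matrix (Fin n) (Fin m) ℝ) (hFp : IsMoorePenrose F Fp)
    (ℓ : Fin m → ℝ) (t : ℝ) (ht : 0 < t)
    (x : ℝ → Fin n → ℝ) (f : ℝ → Fin m → ℝ) (y η : ℝ → Fin p → ℝ)
    (q : ℝ → Fin m → ℝ) (u : ℝ → Fin p → ℝ)
    -- (x,f,y,η) solves the primal DAE on [0,∞):
    (hxint : ∀ T > (0:ℝ), IntervalIntegrable (fun s => A.mulVec (x s) + f s) volume 0 T)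
    (hx : ∀ τ ∈ Set.Ici (0:ℝ),
      F.mulVec (x τ) = F.mulVec (x 0) + ∫ s in (0:ℝ)..τ, (A.mulVec (x s) + f s))
    (hy : ∀ᵐ τ ∂(volume.restrict (Set.Ici (0:ℝ))), y τ = H.mulVec (x τ) + η τ)
    -- (q,u) solves the dual DAE on [0,∞) with Fᵀq(0) = Fᵀℓ:
    (hqint : ∀ T > (0:ℝ), IntervalIntegrable
      (fun s => Aᵀ.mulVec (q s) - Hᵀ.mulVec (u s)) volume 0 T)
    (hq : ∀ τ ∈ Set.Ici (0:ℝ),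
      Fᵀ.mulVec (q τ) = Fᵀ.mulVec (q 0)
        + ∫ s in (0:ℝ)..τ, (Aᵀ.mulVec (q s) - Hᵀ.mulVec (u s)))
    (hq0 : Fᵀ.mulVec (q 0) = Fᵀ.mulVec ℓ)
    -- integrability of the scalar integrands:
    (hyu : IntervalIntegrable (fun s => y s ⬝ᵥ u (t - s)) volume 0 t)
    (hfu : IntervalIntegrable
      (fun s => q (t - s) ⬝ᵥ f s - u (t - s) ⬝ᵥ η s) volume 0 t) :
    ℓ ⬝ᵥ F.mulVec (x t) - (∫ s in (0:ℝ)..t, y s ⬝ᵥ u (t - s))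
      = F.mulVec (x 0) ⬝ᵥ Fpᵀ.mulVec (Fᵀ.mulVec (q t))
        + ∫ s in (0:ℝ)..t, (q (t - s) ⬝ᵥ f s - u (t - s) ⬝ᵥ η s) := by
  obtain ⟨hP1, hP2, hP3, hP4⟩ := hFp
  set a : ℝ → Fin m → ℝ := fun s => A.mulVec (x s) + f s with ha_def
  set b : ℝ → Fin n → ℝ := fun s => Aᵀ.mulVec (q s) - Hᵀ.mulVec (u s) with hb_def
  have hai : IntervalIntegrable a volume 0 t := hxint t ht
  have hbi : IntervalIntegrable b volume 0 t := hqint t ht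
  have haI : IntegrableOn a (Set.Ioc 0 t) volume :=
    (intervalIntegrable_iff_integrableOn_Ioc_of_le ht.le).1 hai
  have hbI : IntegrableOn b (Set.Ioc 0 t) volume :=
    (intervalIntegrable_iff_integrableOn_Ioc_of_le ht.le).1 hbi
  have haiτ : ∀ τ ∈ Set.Icc (0:ℝ) t, IntervalIntegrable a volume 0 τ := by
    intro τ hτ
    rw [intervalIntegrable_iff_integrableOn_Ioc_of_le hτ.1]
    exact haI.mono_set (Set.Ioc_subset_Ioc_right hτ.2)
  have hbiτ : ∀ τ ∈ Set.Icc (0:ℝ) t, IntervalIntegrable b volume 0 τ := by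
    intro τ hτ
    rw [intervalIntegrable_iff_integrableOn_Ioc_of_le hτ.1]
    exact hbI.mono_set (Set.Ioc_subset_Ioc_right hτ.2)
  have hNFt : (Fp * F) * Fᵀ = Fᵀ := by
    calc (Fp * F) * Fᵀ = (Fp * F)ᵀ * Fᵀ := by rw [hP4]
      _ = (F * (Fp * F))ᵀ := by rw [← Matrix.transpose_mul]
      _ = (F * Fp * F)ᵀ := by rw [Matrix.mul_assoc]
      _ = Fᵀ := by rw [hP1]
  -- the derivative of Fx lies a.e. in the range of F
  have hPa : ∀ᵐ s ∂(volume.restrict (Set.Ioc 0 t)), (F * Fp).mulVec (a s) = a s := by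
    have hint : IntegrableOn (fun s => (F * Fp).mulVec (a s) - a s) (Set.Ioc 0 t) volume :=
      ((mvCLM (F * Fp)).integrable_comp haI).sub haI
    have hzero : ∀ τ ∈ Set.Icc (0:ℝ) t,
        (∫ s in (0:ℝ)..τ, ((F * Fp).mulVec (a s) - a s)) = 0 := by
      intro τ hτ
      have h1 : IntervalIntegrable (fun s => (F * Fp).mulVec (a s)) volume 0 τ :=
        ii_clm_comp (haiτ τ hτ) (mvCLM (F * Fp))
      rw [intervalIntegral.integral_sub h1 (haiτ τ hτ), intInt_mulVec (haiτ τ hτ) (F * Fp)]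
      have hIτ : (∫ s in (0:ℝ)..τ, a s) = F.mulVec (x τ) - F.mulVec (x 0) :=
        eq_sub_iff_add_eq.2 (by rw [hx τ (Set.mem_Ici.2 hτ.1)]; exact add_comm _ _)
      rw [hIτ, Matrix.mulVec_sub]
      simp only [Matrix.mulVec_mulVec]
      rw [hP1]
      exact sub_self _
    filter_upwards [ae_zero_aux ht hint hzero] with s hs
    exact sub_eq_zero.1 hs
  -- the derivative of Fᵀq lies a.e. in the range of Fᵀ
  have hPb : ∀ᵐ σ ∂(volume.restrict (Set.Ioc 0 t)), (Fp * F).mulVec (b σ) = b σ := by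
    have hint : IntegrableOn (fun σ => (Fp * F).mulVec (b σ) - b σ) (Set.Ioc 0 t) volume :=
      ((mvCLM (Fp * F)).integrable_comp hbI).sub hbI
    have hzero : ∀ τ ∈ Set.Icc (0:ℝ) t,
        (∫ s in (0:ℝ)..τ, ((Fp * F).mulVec (b s) - b s)) = 0 := by
      intro τ hτ
      have h1 : IntervalIntegrable (fun s => (Fp * F).mulVec (b s)) volume 0 τ :=
        ii_clm_comp (hbiτ τ hτ) (mvCLM (Fp * F))
      rw [intervalIntegral.integral_sub h1 (hbiτ τ hτ), intInt_mulVec (hbiτ τ hτ) (Fp * F)]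
      have hIτ : (∫ s in (0:ℝ)..τ, b s) = Fᵀ.mulVec (q τ) - Fᵀ.mulVec (q 0) :=
        eq_sub_iff_add_eq.2 (by rw [hq τ (Set.mem_Ici.2 hτ.1)]; exact add_comm _ _)
      rw [hIτ, Matrix.mulVec_sub]
      simp only [Matrix.mulVec_mulVec]
      rw [hNFt]
      exact sub_self _
    filter_upwards [ae_zero_aux ht hint hzero] with s hs
    exact sub_eq_zero.1 hs
  have hmp : MeasurePreserving (fun s : ℝ => t - s) volume volume :=
    Measure.measurePreserving_sub_left volume t
  have hPb' : ∀ᵐ s : ℝ ∂volume,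
      (t - s) ∈ Set.Ioc 0 t → (Fp * F).mulVec (b (t - s)) = b (t - s) :=
    hmp.quasiMeasurePreserving.tendsto_ae.eventually (ae_imp_of_ae_restrict hPb)
  have hPa' : ∀ᵐ s : ℝ ∂volume, s ∈ Set.Ioc 0 t → (F * Fp).mulVec (a s) = a s :=
    ae_imp_of_ae_restrict hPa
  have hy' : ∀ᵐ s : ℝ ∂volume, s ∈ Set.Ici (0:ℝ) → y s = H.mulVec (x s) + η s :=
    ae_imp_of_ae_restrict hy
  have hne : ∀ᵐ s : ℝ ∂volume, s ≠ t := by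
    have hset : {s : ℝ | ¬ s ≠ t} = {t} := by ext s; simp
    rw [ae_iff, hset]
    exact measure_singleton t
  set c1 : Fin m → ℝ := Fpᵀ.mulVec (Fᵀ.mulVec (q 0)) with hc1
  set c2 : Fin n → ℝ := Fp.mulVec (F.mulVec (x 0)) with hc2
  have hc1' : c1 = (F * Fp).mulVec ℓ := by
    rw [hc1, hq0, Matrix.mulVec_mulVec, ← Matrix.transpose_mul, hP3]
  have hbrev : IntervalIntegrable (fun s => b (t - s)) volume 0 t := by
    simpa using (hbi.comp_sub_left t).symm
  have hIaIcc : IntegrableOn a (Set.uIcc 0 t) volume := by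
    rw [Set.uIcc_of_le ht.le]
    exact (integrableOn_Icc_iff_integrableOn_Ioc (by simp)).2 haI
  have hIbIcc : IntegrableOn b (Set.uIcc 0 t) volume := by
    rw [Set.uIcc_of_le ht.le]
    exact (integrableOn_Icc_iff_integrableOn_Ioc (by simp)).2 hbI
  have hIacont : ContinuousOn (fun τ => ∫ s' in (0:ℝ)..τ, a s') (Set.uIcc 0 t) :=
    intervalIntegral.continuousOn_primitive_interval hIaIcc
  have hIbcont : ContinuousOn (fun τ => ∫ σ' in (0:ℝ)..τ, b σ') (Set.uIcc 0 t) :=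
    intervalIntegral.continuousOn_primitive_interval hIbIcc
  have hwcont2 : ContinuousOn (fun s => Fpᵀ.mulVec ((∫ σ' in (0:ℝ)..(t - s), b σ'))) (Set.uIcc 0 t) := by
    refine (mvCLM Fpᵀ).continuous.comp_continuousOn ?_
    refine ContinuousOn.comp hIbcont ((continuous_const.sub continuous_id).continuousOn) ?_
    intro s hs
    rw [Set.uIcc_of_le ht.le] at hs ⊢
    exact ⟨by linarith [hs.2], by linarith [hs.1]⟩
  have hwcont4 : ContinuousOn (fun s => Fp.mulVec ((∫ s' in (0:ℝ)..s, a s'))) (Set.uIcc 0 t) :=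
    (mvCLM Fp).continuous.comp_continuousOn hIacont
  have hg1 : IntervalIntegrable (fun s => a s ⬝ᵥ c1) volume 0 t := ii_dot_const hai c1
  have hg2 : IntervalIntegrable (fun s => a s ⬝ᵥ Fpᵀ.mulVec ((∫ σ' in (0:ℝ)..(t - s), b σ'))) volume 0 t :=
    ii_dot_continuousOn hai hwcont2
  have hg3 : IntervalIntegrable (fun s => c2 ⬝ᵥ b (t - s)) volume 0 t := ii_const_dot hbrev c2
  have hg4 : IntervalIntegrable (fun s => Fp.mulVec ((∫ s' in (0:ℝ)..s, a s')) ⬝ᵥ b (t - s)) volume 0 t := by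
    have heq : (fun s => Fp.mulVec ((∫ s' in (0:ℝ)..s, a s')) ⬝ᵥ b (t - s))
        = fun s => b (t - s) ⬝ᵥ Fp.mulVec ((∫ s' in (0:ℝ)..s, a s')) := by
      funext s; exact dotProduct_comm _ _
    rw [heq]
    exact ii_dot_continuousOn hbrev hwcont4
  -- evaluation of the four integrals
  have keyT1 : (∫ s in (0:ℝ)..t, a s ⬝ᵥ c1) = (∫ s' in (0:ℝ)..t, a s') ⬝ᵥ c1 := intInt_dot_const hai c1
  have keyT3 : (∫ s in (0:ℝ)..t, c2 ⬝ᵥ b (t - s)) = c2 ⬝ᵥ (∫ σ' in (0:ℝ)..t, b σ') := by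
    have hcv := intervalIntegral.integral_comp_sub_left (a := (0:ℝ)) (b := t)
      (fun σ => c2 ⬝ᵥ b σ) t
    rw [sub_zero, sub_self] at hcv
    rw [hcv, intInt_const_dot hbi c2]
  have keyT42 : (∫ s in (0:ℝ)..t, Fp.mulVec ((∫ s' in (0:ℝ)..s, a s')) ⬝ᵥ b (t - s))
      = ∫ s in (0:ℝ)..t, a s ⬝ᵥ Fpᵀ.mulVec ((∫ σ' in (0:ℝ)..(t - s), b σ')) := by
    have hcv := intervalIntegral.integral_comp_sub_left (a := (0:ℝ)) (b := t)
      (fun σ => Fp.mulVec ((∫ s' in (0:ℝ)..(t - σ), a s')) ⬝ᵥ b σ) t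
    simp only [sub_sub_cancel, sub_zero, sub_self] at hcv
    have hg2eq : (∫ s in (0:ℝ)..t, a s ⬝ᵥ Fpᵀ.mulVec ((∫ σ' in (0:ℝ)..(t - s), b σ')))
        = ∫ s in (0:ℝ)..t, a s ⬝ᵥ (∫ σ in (0:ℝ)..(t - s), Fpᵀ.mulVec (b σ)) := by
      apply intervalIntegral.integral_congr
      intro s hs
      rw [Set.uIcc_of_le ht.le] at hs
      show a s ⬝ᵥ Fpᵀ.mulVec (∫ σ' in (0:ℝ)..(t - s), b σ')
        = a s ⬝ᵥ (∫ σ in (0:ℝ)..(t - s), Fpᵀ.mulVec (b σ))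
      rw [intInt_mulVec (hbiτ (t - s) ⟨by linarith [hs.2], by linarith [hs.1]⟩) Fpᵀ]
    have htri : (∫ s in (0:ℝ)..t, a s ⬝ᵥ (∫ σ in (0:ℝ)..(t - s), Fpᵀ.mulVec (b σ)))
        = ∫ σ in (0:ℝ)..t, (∫ s' in (0:ℝ)..(t - σ), a s') ⬝ᵥ Fpᵀ.mulVec (b σ) :=
      triangle_swap ht haI ((mvCLM Fpᵀ).integrable_comp hbI)
    have hfin : (∫ σ in (0:ℝ)..t, (∫ s' in (0:ℝ)..(t - σ), a s') ⬝ᵥ Fpᵀ.mulVec (b σ))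
        = ∫ σ in (0:ℝ)..t, Fp.mulVec ((∫ s' in (0:ℝ)..(t - σ), a s')) ⬝ᵥ b σ := by
      apply intervalIntegral.integral_congr
      intro σ _
      show (∫ s' in (0:ℝ)..(t - σ), a s') ⬝ᵥ Fpᵀ.mulVec (b σ)
        = Fp.mulVec (∫ s' in (0:ℝ)..(t - σ), a s') ⬝ᵥ b σ
      exact (mulVec_dot Fp _ _).symm
    rw [hg2eq, htri, hfin, ← hcv]
  -- a.e. identification of the integrand
  have hJ : (∫ s in (0:ℝ)..t,
        (y s ⬝ᵥ u (t - s) + (q (t - s) ⬝ᵥ f s - u (t - s) ⬝ᵥ η s)))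
      = ∫ s in (0:ℝ)..t, ((a s ⬝ᵥ c1 + a s ⬝ᵥ Fpᵀ.mulVec ((∫ σ' in (0:ℝ)..(t - s), b σ')))
          - (c2 ⬝ᵥ b (t - s) + Fp.mulVec ((∫ s' in (0:ℝ)..s, a s')) ⬝ᵥ b (t - s))) := by
    apply intervalIntegral.integral_congr_ae
    filter_upwards [hy', hPa', hPb', hne] with s hys hpa hpb hnet hmem
    rw [Set.uIoc_of_le ht.le] at hmem
    have hslt : s < t := lt_of_le_of_ne hmem.2 hnet
    have hts : (t - s) ∈ Set.Ioc 0 t := ⟨by linarith, by linarith [hmem.1]⟩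
    have hbb := hpb hts
    have haa := hpa hmem
    have hyy := hys (Set.mem_Ici.2 hmem.1.le)
    have e1 : a s ⬝ᵥ q (t - s) = a s ⬝ᵥ c1 + a s ⬝ᵥ Fpᵀ.mulVec ((∫ σ' in (0:ℝ)..(t - s), b σ')) := by
      calc a s ⬝ᵥ q (t - s) = (F * Fp).mulVec (a s) ⬝ᵥ q (t - s) := by rw [haa]
        _ = a s ⬝ᵥ (F * Fp)ᵀ.mulVec (q (t - s)) := mulVec_dot _ _ _
        _ = a s ⬝ᵥ Fpᵀ.mulVec (Fᵀ.mulVec (q (t - s))) := by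
              rw [Matrix.mulVec_mulVec, ← Matrix.transpose_mul]
        _ = a s ⬝ᵥ Fpᵀ.mulVec (Fᵀ.mulVec (q 0) + (∫ σ' in (0:ℝ)..(t - s), b σ')) := by
              rw [hq (t - s) (Set.mem_Ici.2 hts.1.le)]
        _ = a s ⬝ᵥ c1 + a s ⬝ᵥ Fpᵀ.mulVec ((∫ σ' in (0:ℝ)..(t - s), b σ')) := by
              rw [Matrix.mulVec_add, dotProduct_add, hc1]
    have e2 : x s ⬝ᵥ b (t - s) = c2 ⬝ᵥ b (t - s) + Fp.mulVec ((∫ s' in (0:ℝ)..s, a s')) ⬝ᵥ b (t - s) := by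
      calc x s ⬝ᵥ b (t - s) = x s ⬝ᵥ (Fp * F).mulVec (b (t - s)) := by rw [hbb]
        _ = x s ⬝ᵥ (Fp * F)ᵀ.mulVec (b (t - s)) := by rw [hP4]
        _ = (Fp * F).mulVec (x s) ⬝ᵥ b (t - s) := (mulVec_dot _ _ _).symm
        _ = Fp.mulVec (F.mulVec (x s)) ⬝ᵥ b (t - s) := by rw [Matrix.mulVec_mulVec]
        _ = Fp.mulVec (F.mulVec (x 0) + (∫ s' in (0:ℝ)..s, a s')) ⬝ᵥ b (t - s) := by
              rw [hx s (Set.mem_Ici.2 hmem.1.le)]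
        _ = c2 ⬝ᵥ b (t - s) + Fp.mulVec ((∫ s' in (0:ℝ)..s, a s')) ⬝ᵥ b (t - s) := by
              rw [Matrix.mulVec_add, add_dotProduct, hc2]
    rw [← e1, ← e2, hyy, ha_def, hb_def]
    simp only [add_dotProduct, dotProduct_sub, mulVec_dot]
    rw [dotProduct_comm (q (t - s)) (f s), dotProduct_comm (u (t - s)) (η s)]
    ring
  have hsplit : (∫ s in (0:ℝ)..t, ((a s ⬝ᵥ c1 + a s ⬝ᵥ Fpᵀ.mulVec ((∫ σ' in (0:ℝ)..(t - s), b σ')))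
        - (c2 ⬝ᵥ b (t - s) + Fp.mulVec ((∫ s' in (0:ℝ)..s, a s')) ⬝ᵥ b (t - s))))
      = ((∫ s in (0:ℝ)..t, a s ⬝ᵥ c1)
          + ∫ s in (0:ℝ)..t, a s ⬝ᵥ Fpᵀ.mulVec ((∫ σ' in (0:ℝ)..(t - s), b σ')))
        - ((∫ s in (0:ℝ)..t, c2 ⬝ᵥ b (t - s))
          + ∫ s in (0:ℝ)..t, Fp.mulVec ((∫ s' in (0:ℝ)..s, a s')) ⬝ᵥ b (t - s)) := by
    rw [intervalIntegral.integral_sub (hg1.add hg2) (hg3.add hg4),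
      intervalIntegral.integral_add hg1 hg2, intervalIntegral.integral_add hg3 hg4]
  have hJ2 : (∫ s in (0:ℝ)..t, y s ⬝ᵥ u (t - s))
      + (∫ s in (0:ℝ)..t, (q (t - s) ⬝ᵥ f s - u (t - s) ⬝ᵥ η s))
      = (∫ s' in (0:ℝ)..t, a s') ⬝ᵥ c1 - c2 ⬝ᵥ (∫ σ' in (0:ℝ)..t, b σ') := by
    rw [← intervalIntegral.integral_add hyu hfu, hJ, hsplit, keyT1, keyT3, keyT42]
    ring
  have hxt : F.mulVec (x t) = F.mulVec (x 0) + (∫ s' in (0:ℝ)..t, a s') := hx t (Set.mem_Ici.2 ht.le)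
  have hqt : Fᵀ.mulVec (q t) = Fᵀ.mulVec (q 0) + (∫ σ' in (0:ℝ)..t, b σ') := hq t (Set.mem_Ici.2 ht.le)
  have hA : ℓ ⬝ᵥ F.mulVec (x 0) = F.mulVec (x 0) ⬝ᵥ c1 := by
    rw [hc1', ← hP3, ← mulVec_dot, Matrix.mulVec_mulVec, hP1, dotProduct_comm]
  have hiat : (F * Fp).mulVec ((∫ s' in (0:ℝ)..t, a s')) = (∫ s' in (0:ℝ)..t, a s') := by
    have hIt : (∫ s' in (0:ℝ)..t, a s') = F.mulVec (x t) - F.mulVec (x 0) :=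
      eq_sub_iff_add_eq.2 (by rw [hxt]; exact add_comm _ _)
    rw [hIt, Matrix.mulVec_sub]
    simp only [Matrix.mulVec_mulVec]
    rw [hP1]
  have hB : ℓ ⬝ᵥ (∫ s' in (0:ℝ)..t, a s') = (∫ s' in (0:ℝ)..t, a s') ⬝ᵥ c1 := by
    rw [hc1', ← hP3, ← mulVec_dot, hiat, dotProduct_comm]
  have hC : F.mulVec (x 0) ⬝ᵥ Fpᵀ.mulVec ((∫ σ' in (0:ℝ)..t, b σ')) = c2 ⬝ᵥ (∫ σ' in (0:ℝ)..t, b σ') :=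
    (mulVec_dot Fp (F.mulVec (x 0)) ((∫ σ' in (0:ℝ)..t, b σ'))).symm
  rw [hxt, hqt, dotProduct_add, Matrix.mulVec_add, dotProduct_add, ← hc1]
  linarith [hA, hB, hC, hJ2]
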